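/- Let Q1, Q2 : A → ℝ be functions on a finite nonempty set A and let β ∈ [0,1]. Then |(β · max Q1 + (1-β) · min Q1) - (β · max Q2 + (1-β) · min Q2)| ≤ max_{a∈A} |Q1(a) - Q2(a)|. That is, the balanced backup operator Q ↦ β·max Q + (1-β)·min Q is a non-expansion in the sup norm. -/
import Mathlib

lemma sup'_sub_le (A : Type*) [Fintype A] [Nonempty A] (Q1 Q2 : A → ℝ) :
    Finset.univ.sup' Finset.univ_nonempty Q1 - Finset.univ.sup' Finset.univ_nonempty Q2 ≤
      Finset.univ.sup' Finset.univ_nonempty (fun a => |Q1 a - Q2 a|) := by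
  rw [sub_le_iff_le_add]
  apply Finset.sup'_le
  intro a _
  calc Q1 a ≤ |Q1 a - Q2 a| + Q2 a := by
        have := abs_sub_abs_le_abs_sub (Q1 a) (Q2 a)
        have h1 := le_abs_self (Q1 a); have h2 := neg_abs_le (Q2 a)
        have := abs_sub (Q1 a) (Q2 a); linarith [le_abs_self (Q1 a - Q2 a)]
    _ ≤ _ := by
        gcongr
        · exact Finset.le_sup' (fun a => |Q1 a - Q2 a|) (Finset.mem_univ a)
        · exact Finset.le_sup' Q2 (Finset.mem_univ a)

lemma inf'_sub_le (A : Type*) [Fintype A] [Nonempty A] (Q1 Q2 : A → ℝ) :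
    Finset.univ.inf' Finset.univ_nonempty Q1 - Finset.univ.inf' Finset.univ_nonempty Q2 ≤
      Finset.univ.sup' Finset.univ_nonempty (fun a => |Q1 a - Q2 a|) := by
  rw [sub_le_iff_le_add]
  obtain ⟨a, _, ha⟩ := Finset.exists_mem_eq_inf' (Finset.univ_nonempty (α := A)) Q2
  calc Finset.univ.inf' Finset.univ_nonempty Q1 ≤ Q1 a :=
        Finset.inf'_le _ (Finset.mem_univ a)
    _ ≤ |Q1 a - Q2 a| + Q2 a := by linarith [le_abs_self (Q1 a - Q2 a)]
    _ ≤ _ := by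
        rw [ha]; gcongr; exact Finset.le_sup' (fun a => |Q1 a - Q2 a|) (Finset.mem_univ a)

theorem balanced_backup_nonexpansion (A : Type*) [Fintype A] [Nonempty A]
    (Q1 Q2 : A → ℝ) (β : ℝ) (hβ0 : 0 ≤ β) (hβ1 : β ≤ 1) :
    |(β * Finset.univ.sup' Finset.univ_nonempty Q1
        + (1 - β) * Finset.univ.inf' Finset.univ_nonempty Q1)
      - (β * Finset.univ.sup' Finset.univ_nonempty Q2
        + (1 - β) * Finset.univ.inf' Finset.univ_nonempty Q2)| ≤
      Finset.univ.sup' Finset.univ_nonempty (fun a => |Q1 a - Q2 a|) := by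
  have h1 := sup'_sub_le A Q1 Q2
  have h2 := sup'_sub_le A Q2 Q1
  have h3 := inf'_sub_le A Q1 Q2
  have h4 := inf'_sub_le A Q2 Q1
  have h24 : Finset.univ.sup' Finset.univ_nonempty (fun a => |Q2 a - Q1 a|) =
      Finset.univ.sup' Finset.univ_nonempty (fun a => |Q1 a - Q2 a|) := by
    congr 1; ext a; exact abs_sub_comm _ _
  rw [h24] at h2 h4
  rw [abs_le]
  constructor <;> nlinarith [h1, h2, h3, h4, hβ0, hβ1]
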